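/- arXiv:2202.02300 — 3 statements merged into one kernel-verified Lean document; each statement's English description precedes it below -/
import Mathlib

section
/- Under the balanced double linear feedback scheme (α = 1/2), for every stage k > 1, every admissible gain K ∈ (0, K_max] with K_max = min(1, 1/X_max), and every μ ≠ 0 with -1 < μ ≤ X_max, the expected cumulative gain-loss Ḡ(1/2, K, k) = (V_0/2)((1+Kμ)^k + (1-Kμ)^k - 2) is strictly positive. Moreover, if Kμ = 0 then Ḡ(1/2, K, k) = 0. -/
theorem stmt_2 (V₀ Xmax μ K : ℝ) (hV₀ : 0 < V₀) (hXmax : 0 < Xmax)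
    (k : ℕ) (hk : 1 < k) :
    (K ∈ Set.Ioc 0 (min 1 (1 / Xmax)) → μ ≠ 0 → -1 < μ → μ ≤ Xmax →
      0 < V₀ / 2 * ((1 + K * μ) ^ k + (1 - K * μ) ^ k - 2)) ∧
    (K * μ = 0 → V₀ / 2 * ((1 + K * μ) ^ k + (1 - K * μ) ^ k - 2) = 0) := by
  constructor
  · rintro ⟨hK0, hK1⟩ hμ hμ1 hμX
    set x := K * μ with hx
    have hK1' : K ≤ 1 := le_trans hK1 (min_le_left _ _)
    have hKX : K ≤ 1 / Xmax := le_trans hK1 (min_le_right _ _)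
    have hxlt : x < 1 ∨ x ≤ 1 := Or.inr (by
      calc K * μ ≤ K * Xmax := by nlinarith
        _ ≤ (1 / Xmax) * Xmax := by nlinarith
        _ = 1 := by field_simp)
    have hxub : x ≤ 1 := by
      rcases hxlt with h | h
      · exact h.le
      · exact h
    have hxlb : -1 < x := by nlinarith
    have ha : (0:ℝ) ≤ 1 + x := by linarith
    have hb : (0:ℝ) ≤ 1 - x := by linarith
    have hne : (1 + x) ≠ (1 - x) := by
      intro h
      apply hμ
      have : x = 0 := by linarith
      rcases mul_eq_zero.mp (hx ▸ this) with h | h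
      · exact absurd h (ne_of_gt hK0)
      · exact h
    have hconv := strictConvexOn_pow hk
    have := hconv.2 (Set.mem_Ici.mpr ha) (Set.mem_Ici.mpr hb) hne
      (by norm_num : (0:ℝ) < 1/2) (by norm_num : (0:ℝ) < 1/2) (by norm_num)
    simp only [smul_eq_mul] at this
    have h2 : ((1:ℝ)/2 * (1 + x) + 1/2 * (1 - x)) = 1 := by ring
    rw [h2, one_pow] at this
    nlinarith
  · intro h
    rw [h]
    norm_num
end

section
/- Let K ∈ [0, min(1, 1/X_max)], μ ∈ (-1, X_max], σ² ≥ 0, and integer k ≥ 2. Then μ·[((1+Kμ)² + K²σ²)^{k-1} − ((1−Kμ)² + K²σ²)^{k-1}] ≥ μ·[((1+Kμ)²)^{k-1} − ((1−Kμ)²)^{k-1}]. -/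
lemma aux_pow_diff (n : ℕ) (a b c : ℝ) (hb : 0 ≤ b) (hba : b ≤ a) (hc : 0 ≤ c) :
    a ^ n - b ^ n ≤ (a + c) ^ n - (b + c) ^ n := by
  induction n with
  | zero => simp
  | succ n ih =>
    have ha : 0 ≤ a := hb.trans hba
    have h1 : b ^ n ≤ (b + c) ^ n := pow_le_pow_left₀ hb (by linarith) n
    have h2 : (0:ℝ) ≤ a ^ n - b ^ n := by
      have := pow_le_pow_left₀ hb hba n; linarith
    calc a ^ (n+1) - b ^ (n+1)
        = a * (a ^ n - b ^ n) + (a - b) * b ^ n := by ring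
      _ ≤ (a + c) * ((a + c) ^ n - (b + c) ^ n) + (a - b) * (b + c) ^ n := by
          nlinarith [mul_le_mul_of_nonneg_left ih (by linarith : (0:ℝ) ≤ a + c)]
      _ = (a + c) ^ (n+1) - (b + c) ^ (n+1) := by ring

theorem stmt_12 (Xmax K μ σ2 : ℝ) (hXmax : 0 < Xmax)
    (hK : K ∈ Set.Icc 0 (min 1 (1 / Xmax))) (hμ : μ ∈ Set.Ioc (-1 : ℝ) Xmax)
    (hσ2 : 0 ≤ σ2) (k : ℕ) (hk : 2 ≤ k) :
    μ * (((1 + K * μ) ^ 2) ^ (k - 1) - ((1 - K * μ) ^ 2) ^ (k - 1)) ≤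
      μ * (((1 + K * μ) ^ 2 + K ^ 2 * σ2) ^ (k - 1) -
        ((1 - K * μ) ^ 2 + K ^ 2 * σ2) ^ (k - 1)) := by
  obtain ⟨hK0, hK1⟩ := hK
  have hc : (0:ℝ) ≤ K ^ 2 * σ2 := by positivity
  rcases le_or_gt 0 μ with hμ0 | hμ0
  · -- μ ≥ 0, so K*μ ≥ 0 and (1-Kμ)² ≤ (1+Kμ)²
    have hKμ : 0 ≤ K * μ := mul_nonneg hK0 hμ0
    have h := aux_pow_diff (k - 1) ((1 + K * μ) ^ 2) ((1 - K * μ) ^ 2) (K ^ 2 * σ2)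
      (sq_nonneg _) (by nlinarith) hc
    exact mul_le_mul_of_nonneg_left h hμ0
  · -- μ < 0, so K*μ ≤ 0 and (1+Kμ)² ≤ (1-Kμ)²
    have hKμ : K * μ ≤ 0 := mul_nonpos_of_nonneg_of_nonpos hK0 hμ0.le
    have h := aux_pow_diff (k - 1) ((1 - K * μ) ^ 2) ((1 + K * μ) ^ 2) (K ^ 2 * σ2)
      (sq_nonneg _) (by nlinarith) hc
    nlinarith [h, hμ0]
end

section
/- Let X(0),...,X(k-1) be independent random variables with common mean μ and common variance σ², bounded in [X_min, X_max], K ∈ [0, min(1, 1/X_max)], α ∈ [0,1], V_0 > 0, and G = V_0(α∏_{j<k}(1+K X(j)) + (1−α)∏_{j<k}(1−K X(j)) − 1). Then Var(G) = α²V_0²((1+Kμ)² + K²σ²)^k + (1−α)²V_0²((1−Kμ)² + K²σ²)^k + 2α(1−α)V_0²(1 − K²(σ²+μ²))^k − 2αV_0²(1+Kμ)^k − 2(1−α)V_0²(1−Kμ)^k + V_0² − V_0²(α(1+Kμ)^k + (1−α)(1−Kμ)^k − 1)². -/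
open MeasureTheory ProbabilityTheory

lemma aux_integrable {Ω : Type*} [MeasureSpace Ω] [IsProbabilityMeasure (ℙ : Measure Ω)]
    {f : Ω → ℝ} (hf : Measurable f) (C : ℝ) (h : ∀ᵐ ω ∂ℙ, |f ω| ≤ C) :
    Integrable f ℙ :=
  memLp_one_iff_integrable.1 (MemLp.of_bound hf.aestronglyMeasurable C (by simpa using h))

lemma aux_prod_integral {Ω : Type*} [MeasureSpace Ω] [IsProbabilityMeasure (ℙ : Measure Ω)]
    {ι : Type*} {Y : ι → Ω → ℝ} (hmeas : ∀ j, Measurable (Y j))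
    (hind : iIndepFun Y ℙ)
    (hint : ∀ j, Integrable (Y j) ℙ) (s : Finset ι) :
    Integrable (fun ω => ∏ j ∈ s, Y j ω) ℙ ∧
      ∫ ω, ∏ j ∈ s, Y j ω ∂ℙ = ∏ j ∈ s, ∫ ω, Y j ω ∂ℙ := by
  classical
  induction s using Finset.induction_on with
  | empty => simp
  | insert i s hi ih =>
    have hIF : IndepFun (fun ω => ∏ j ∈ s, Y j ω) (Y i) ℙ := by
      have := hind.indepFun_finset_prod_of_notMem hmeas hi
      simpa [Finset.prod_fn] using this
    have h1 : Integrable ((Y i) * fun ω => ∏ j ∈ s, Y j ω) ℙ :=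
      hIF.symm.integrable_mul (hint i) ih.1
    have h2 := hIF.symm.integral_mul_eq_mul_integral (hint i).aestronglyMeasurable ih.1.aestronglyMeasurable
    constructor
    · simp only [Finset.prod_insert hi]; exact h1
    · rw [Finset.prod_insert hi, ← ih.2]
      simpa [Finset.prod_insert hi, Pi.mul_apply] using h2

theorem stmt_17 {Ω : Type*} [MeasureSpace Ω] [IsProbabilityMeasure (ℙ : Measure Ω)]
    (k : ℕ) (X : Fin k → Ω → ℝ) (μ σ Xmin Xmax K α V₀ : ℝ)
    (hXmin : -1 < Xmin) (hXmin0 : Xmin < 0) (hXmax : 0 < Xmax)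
    (hmeas : ∀ j, Measurable (X j))
    (hind : iIndepFun X ℙ)
    (hmean : ∀ j, ∫ ω, X j ω ∂ℙ = μ)
    (hvar : ∀ j, ∫ ω, (X j ω - μ) ^ 2 ∂ℙ = σ ^ 2)
    (hbdd : ∀ j, ∀ᵐ ω ∂ℙ, X j ω ∈ Set.Icc Xmin Xmax)
    (hK : K ∈ Set.Icc 0 (min 1 (1 / Xmax))) (hα : α ∈ Set.Icc (0 : ℝ) 1)
    (hV₀ : 0 < V₀) :
    variance
      (fun ω => V₀ * (α * ∏ j, (1 + K * X j ω) + (1 - α) * ∏ j, (1 - K * X j ω) - 1)) ℙ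
      = α ^ 2 * V₀ ^ 2 * ((1 + K * μ) ^ 2 + K ^ 2 * σ ^ 2) ^ k
        + (1 - α) ^ 2 * V₀ ^ 2 * ((1 - K * μ) ^ 2 + K ^ 2 * σ ^ 2) ^ k
        + 2 * α * (1 - α) * V₀ ^ 2 * (1 - K ^ 2 * (σ ^ 2 + μ ^ 2)) ^ k
        - 2 * α * V₀ ^ 2 * (1 + K * μ) ^ k
        - 2 * (1 - α) * V₀ ^ 2 * (1 - K * μ) ^ k
        + V₀ ^ 2
        - V₀ ^ 2 * (α * (1 + K * μ) ^ k + (1 - α) * (1 - K * μ) ^ k - 1) ^ 2 := by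
  -- bound on X
  set M : ℝ := max (-Xmin) Xmax with hM
  have hM0 : 0 ≤ M := le_trans hXmax.le (le_max_right _ _)
  have hbd : ∀ j, ∀ᵐ ω ∂ℙ, |X j ω| ≤ M := fun j =>
    (hbdd j).mono fun ω h => abs_le.2
      ⟨le_trans (by rw [hM, neg_le]; exact le_max_left _ _) h.1,
       le_trans h.2 (le_max_right _ _)⟩
  -- integrability of X and X²
  have hintX : ∀ j, Integrable (X j) ℙ := fun j => aux_integrable (hmeas j) M (hbd j)
  have hintX2 : ∀ j, Integrable (fun ω => X j ω ^ 2) ℙ := fun j =>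
    aux_integrable ((hmeas j).pow_const 2) (M ^ 2)
      ((hbd j).mono fun ω h => by
        rw [abs_pow]; exact pow_le_pow_left₀ (abs_nonneg _) h 2)
  -- second moment
  have hEX2 : ∀ j, ∫ ω, X j ω ^ 2 ∂ℙ = σ ^ 2 + μ ^ 2 := by
    intro j
    have hrw : ∫ ω, (X j ω - μ) ^ 2 ∂ℙ
        = ∫ ω, (X j ω ^ 2 + (-(2 * μ)) * X j ω + μ ^ 2) ∂ℙ := by
      congr 1; funext ω; ring
    have h1 : Integrable (fun ω => X j ω ^ 2 + (-(2 * μ)) * X j ω) ℙ :=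
      (hintX2 j).add ((hintX j).const_mul _)
    have h1a : Integrable (fun ω => (-(2 * μ)) * X j ω) ℙ := (hintX j).const_mul _
    have h2 := hvar j
    rw [hrw, integral_add h1 (integrable_const _),
      integral_add (hintX2 j) h1a, integral_const_mul, hmean j,
      integral_const] at h2
    simp only [measure_univ, ENNReal.toReal_one, probReal_univ, one_smul] at h2
    linarith
  -- the key one-factor integral
  have key : ∀ (a b c : ℝ) (j : Fin k),
      ∫ ω, (a + b * X j ω + c * X j ω ^ 2) ∂ℙ = a + b * μ + c * (σ ^ 2 + μ ^ 2) := by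
    intro a b c j
    have j1 : Integrable (fun ω => a + b * X j ω) ℙ :=
      (integrable_const a).add ((hintX j).const_mul b)
    have j2 : Integrable (fun ω => c * X j ω ^ 2) ℙ := (hintX2 j).const_mul c
    have j3 : Integrable (fun ω => b * X j ω) ℙ := (hintX j).const_mul b
    rw [integral_add j1 j2, integral_add (integrable_const a) j3,
      integral_const, integral_const_mul, integral_const_mul, hmean j, hEX2 j]
    simp
  -- factor families
  have hmf : ∀ j, Measurable (fun ω => 1 + K * X j ω) := fun j =>
    measurable_const.add (measurable_const.mul (hmeas j))
  have hmg : ∀ j, Measurable (fun ω => 1 - K * X j ω) := fun j =>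
    measurable_const.sub (measurable_const.mul (hmeas j))
  set B : ℝ := 1 + |K| * M with hB
  have hfB : ∀ j, ∀ᵐ ω ∂ℙ, |1 + K * X j ω| ≤ B := fun j =>
    (hbd j).mono fun ω h => by
      calc |1 + K * X j ω| ≤ |(1 : ℝ)| + |K * X j ω| := abs_add_le _ _
        _ = 1 + |K| * |X j ω| := by rw [abs_one, abs_mul]
        _ ≤ 1 + |K| * M := by nlinarith [abs_nonneg K, abs_nonneg (X j ω)]
  have hgB : ∀ j, ∀ᵐ ω ∂ℙ, |1 - K * X j ω| ≤ B := fun j =>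
    (hbd j).mono fun ω h => by
      calc |1 - K * X j ω| ≤ |(1 : ℝ)| + |K * X j ω| := abs_sub _ _
        _ = 1 + |K| * |X j ω| := by rw [abs_one, abs_mul]
        _ ≤ 1 + |K| * M := by nlinarith [abs_nonneg K, abs_nonneg (X j ω)]
  have hintf : ∀ j, Integrable (fun ω => 1 + K * X j ω) ℙ := fun j =>
    aux_integrable (hmf j) B (hfB j)
  have hintg : ∀ j, Integrable (fun ω => 1 - K * X j ω) ℙ := fun j =>
    aux_integrable (hmg j) B (hgB j)
  have hintf2 : ∀ j, Integrable (fun ω => (1 + K * X j ω) ^ 2) ℙ := fun j =>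
    aux_integrable ((hmf j).pow_const 2) (B ^ 2)
      ((hfB j).mono fun ω h => by rw [abs_pow]; exact pow_le_pow_left₀ (abs_nonneg _) h 2)
  have hintg2 : ∀ j, Integrable (fun ω => (1 - K * X j ω) ^ 2) ℙ := fun j =>
    aux_integrable ((hmg j).pow_const 2) (B ^ 2)
      ((hgB j).mono fun ω h => by rw [abs_pow]; exact pow_le_pow_left₀ (abs_nonneg _) h 2)
  have hintfg : ∀ j, Integrable (fun ω => (1 + K * X j ω) * (1 - K * X j ω)) ℙ := fun j =>
    aux_integrable ((hmf j).mul (hmg j)) (B * B)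
      (((hfB j).and (hgB j)).mono fun ω h => by
        rw [abs_mul]; exact mul_le_mul h.1 h.2 (abs_nonneg _) (le_trans (abs_nonneg _) h.1))
  -- independence of factor families
  have hindf : iIndepFun (fun j ω => 1 + K * X j ω) ℙ :=
    hind.comp (fun _ x => 1 + K * x) (fun _ => measurable_const.add (measurable_const.mul measurable_id))
  have hindg : iIndepFun (fun j ω => 1 - K * X j ω) ℙ :=
    hind.comp (fun _ x => 1 - K * x) (fun _ => measurable_const.sub (measurable_const.mul measurable_id))
  have hindf2 : iIndepFun (fun j ω => (1 + K * X j ω) ^ 2) ℙ :=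
    hind.comp (fun _ x => (1 + K * x) ^ 2)
      (fun _ => (measurable_const.add (measurable_const.mul measurable_id)).pow_const 2)
  have hindg2 : iIndepFun (fun j ω => (1 - K * X j ω) ^ 2) ℙ :=
    hind.comp (fun _ x => (1 - K * x) ^ 2)
      (fun _ => (measurable_const.sub (measurable_const.mul measurable_id)).pow_const 2)
  have hindfg : iIndepFun (fun j ω => (1 + K * X j ω) * (1 - K * X j ω)) ℙ :=
    hind.comp (fun _ x => (1 + K * x) * (1 - K * x))
      (fun _ => (measurable_const.add (measurable_const.mul measurable_id)).mul
        (measurable_const.sub (measurable_const.mul measurable_id)))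
  -- one-factor integral values
  have Ef : ∀ j, ∫ ω, (1 + K * X j ω) ∂ℙ = 1 + K * μ := by
    intro j
    have := key 1 K 0 j
    rw [show (fun ω => 1 + K * X j ω) = fun ω => 1 + K * X j ω + 0 * X j ω ^ 2 from
      funext fun ω => by ring]
    rw [this]; ring
  have Eg : ∀ j, ∫ ω, (1 - K * X j ω) ∂ℙ = 1 - K * μ := by
    intro j
    have := key 1 (-K) 0 j
    rw [show (fun ω => 1 - K * X j ω) = fun ω => 1 + (-K) * X j ω + 0 * X j ω ^ 2 from
      funext fun ω => by ring]
    rw [this]; ring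
  have Ef2 : ∀ j, ∫ ω, (1 + K * X j ω) ^ 2 ∂ℙ = (1 + K * μ) ^ 2 + K ^ 2 * σ ^ 2 := by
    intro j
    have := key 1 (2 * K) (K ^ 2) j
    rw [show (fun ω => (1 + K * X j ω) ^ 2) = fun ω => 1 + (2 * K) * X j ω + K ^ 2 * X j ω ^ 2 from
      funext fun ω => by ring]
    rw [this]; ring
  have Eg2 : ∀ j, ∫ ω, (1 - K * X j ω) ^ 2 ∂ℙ = (1 - K * μ) ^ 2 + K ^ 2 * σ ^ 2 := by
    intro j
    have := key 1 (-(2 * K)) (K ^ 2) j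
    rw [show (fun ω => (1 - K * X j ω) ^ 2) = fun ω => 1 + (-(2 * K)) * X j ω + K ^ 2 * X j ω ^ 2 from
      funext fun ω => by ring]
    rw [this]; ring
  have Efg : ∀ j, ∫ ω, ((1 + K * X j ω) * (1 - K * X j ω)) ∂ℙ = 1 - K ^ 2 * (σ ^ 2 + μ ^ 2) := by
    intro j
    have := key 1 0 (-(K ^ 2)) j
    rw [show (fun ω => (1 + K * X j ω) * (1 - K * X j ω))
        = fun ω => 1 + 0 * X j ω + (-(K ^ 2)) * X j ω ^ 2 from funext fun ω => by ring]
    rw [this]; ring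
  -- product integrals
  obtain ⟨hiP, hEP⟩ := aux_prod_integral hmf hindf hintf Finset.univ
  obtain ⟨hiQ, hEQ⟩ := aux_prod_integral hmg hindg hintg Finset.univ
  obtain ⟨hiP2, hEP2⟩ := aux_prod_integral (fun j => (hmf j).pow_const 2) hindf2 hintf2 Finset.univ
  obtain ⟨hiQ2, hEQ2⟩ := aux_prod_integral (fun j => (hmg j).pow_const 2) hindg2 hintg2 Finset.univ
  obtain ⟨hiPQ, hEPQ⟩ := aux_prod_integral (fun j => (hmf j).mul (hmg j)) hindfg hintfg Finset.univ
  rw [Finset.prod_congr rfl fun j _ => Ef j, Finset.prod_const, Finset.card_univ,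
    Fintype.card_fin] at hEP
  rw [Finset.prod_congr rfl fun j _ => Eg j, Finset.prod_const, Finset.card_univ,
    Fintype.card_fin] at hEQ
  rw [Finset.prod_congr rfl fun j _ => Ef2 j, Finset.prod_const, Finset.card_univ,
    Fintype.card_fin] at hEP2
  rw [Finset.prod_congr rfl fun j _ => Eg2 j, Finset.prod_const, Finset.card_univ,
    Fintype.card_fin] at hEQ2
  simp only [Pi.mul_apply] at hiPQ hEPQ
  rw [Finset.prod_congr rfl fun j _ => Efg j, Finset.prod_const, Finset.card_univ,
    Fintype.card_fin] at hEPQ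
  -- restate products of squares / product of the two products
  have hP2 : (fun ω => (∏ j, (1 + K * X j ω)) ^ 2) = fun ω => ∏ j, (1 + K * X j ω) ^ 2 := by
    funext ω; rw [Finset.prod_pow]
  have hQ2 : (fun ω => (∏ j, (1 - K * X j ω)) ^ 2) = fun ω => ∏ j, (1 - K * X j ω) ^ 2 := by
    funext ω; rw [Finset.prod_pow]
  have hPQ : (fun ω => (∏ j, (1 + K * X j ω)) * ∏ j, (1 - K * X j ω))
      = fun ω => ∏ j, ((1 + K * X j ω) * (1 - K * X j ω)) := by
    funext ω; rw [← Finset.prod_mul_distrib]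
  have hiP2' : Integrable (fun ω => (∏ j, (1 + K * X j ω)) ^ 2) ℙ := by rw [hP2]; exact hiP2
  have hiQ2' : Integrable (fun ω => (∏ j, (1 - K * X j ω)) ^ 2) ℙ := by rw [hQ2]; exact hiQ2
  have hiPQ' : Integrable (fun ω => (∏ j, (1 + K * X j ω)) * ∏ j, (1 - K * X j ω)) ℙ := by
    rw [hPQ]; exact hiPQ
  have hEP2' : ∫ ω, (∏ j, (1 + K * X j ω)) ^ 2 ∂ℙ = ((1 + K * μ) ^ 2 + K ^ 2 * σ ^ 2) ^ k := by
    rw [show (fun ω => (∏ j, (1 + K * X j ω)) ^ 2) = fun ω => ∏ j, (1 + K * X j ω) ^ 2 from hP2]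
    exact hEP2
  have hEQ2' : ∫ ω, (∏ j, (1 - K * X j ω)) ^ 2 ∂ℙ = ((1 - K * μ) ^ 2 + K ^ 2 * σ ^ 2) ^ k := by
    rw [show (fun ω => (∏ j, (1 - K * X j ω)) ^ 2) = fun ω => ∏ j, (1 - K * X j ω) ^ 2 from hQ2]
    exact hEQ2
  have hEPQ' : ∫ ω, ((∏ j, (1 + K * X j ω)) * ∏ j, (1 - K * X j ω)) ∂ℙ
      = (1 - K ^ 2 * (σ ^ 2 + μ ^ 2)) ^ k := by
    rw [show (fun ω => (∏ j, (1 + K * X j ω)) * ∏ j, (1 - K * X j ω))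
        = fun ω => ∏ j, ((1 + K * X j ω) * (1 - K * X j ω)) from hPQ]
    exact hEPQ
  -- G is in L²
  have hGmeas : Measurable (fun ω =>
      V₀ * (α * ∏ j, (1 + K * X j ω) + (1 - α) * ∏ j, (1 - K * X j ω) - 1)) := by
    apply Measurable.const_mul
    exact ((measurable_const.mul (Finset.measurable_prod _ fun j _ => hmf j)).add
      (measurable_const.mul (Finset.measurable_prod _ fun j _ => hmg j))).sub measurable_const
  have hBnn : 0 ≤ B := by positivity
  have hPbd : ∀ᵐ ω ∂ℙ, |∏ j, (1 + K * X j ω)| ≤ B ^ k := by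
    have := ae_all_iff.2 hfB
    filter_upwards [this] with ω hω
    calc |∏ j, (1 + K * X j ω)| = ∏ j, |1 + K * X j ω| := by rw [Finset.abs_prod]
      _ ≤ ∏ _j : Fin k, B := Finset.prod_le_prod (fun j _ => abs_nonneg _) fun j _ => hω j
      _ = B ^ k := by rw [Finset.prod_const, Finset.card_univ, Fintype.card_fin]
  have hQbd : ∀ᵐ ω ∂ℙ, |∏ j, (1 - K * X j ω)| ≤ B ^ k := by
    have := ae_all_iff.2 hgB
    filter_upwards [this] with ω hω
    calc |∏ j, (1 - K * X j ω)| = ∏ j, |1 - K * X j ω| := by rw [Finset.abs_prod]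
      _ ≤ ∏ _j : Fin k, B := Finset.prod_le_prod (fun j _ => abs_nonneg _) fun j _ => hω j
      _ = B ^ k := by rw [Finset.prod_const, Finset.card_univ, Fintype.card_fin]
  have hG2 : MemLp (fun ω =>
      V₀ * (α * ∏ j, (1 + K * X j ω) + (1 - α) * ∏ j, (1 - K * X j ω) - 1)) 2 ℙ := by
    apply MemLp.of_bound hGmeas.aestronglyMeasurable
      (|V₀| * (|α| * B ^ k + |1 - α| * B ^ k + 1))
    filter_upwards [hPbd, hQbd] with ω h1 h2
    have : |α * ∏ j, (1 + K * X j ω) + (1 - α) * ∏ j, (1 - K * X j ω) - 1|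
        ≤ |α| * B ^ k + |1 - α| * B ^ k + 1 := by
      calc |α * ∏ j, (1 + K * X j ω) + (1 - α) * ∏ j, (1 - K * X j ω) - 1|
          ≤ |α * ∏ j, (1 + K * X j ω) + (1 - α) * ∏ j, (1 - K * X j ω)| + |(1:ℝ)| := abs_sub _ _
        _ ≤ |α * ∏ j, (1 + K * X j ω)| + |(1 - α) * ∏ j, (1 - K * X j ω)| + 1 := by
            rw [abs_one]; gcongr; exact abs_add_le _ _
        _ ≤ |α| * B ^ k + |1 - α| * B ^ k + 1 := by
            rw [abs_mul, abs_mul]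
            have u1 := mul_le_mul_of_nonneg_left h1 (abs_nonneg α)
            have u2 := mul_le_mul_of_nonneg_left h2 (abs_nonneg (1 - α))
            linarith
    calc ‖V₀ * (α * ∏ j, (1 + K * X j ω) + (1 - α) * ∏ j, (1 - K * X j ω) - 1)‖
        = |V₀| * |α * ∏ j, (1 + K * X j ω) + (1 - α) * ∏ j, (1 - K * X j ω) - 1| := by
          rw [Real.norm_eq_abs, abs_mul]
      _ ≤ |V₀| * (|α| * B ^ k + |1 - α| * B ^ k + 1) :=
          mul_le_mul_of_nonneg_left this (abs_nonneg _)
  -- expectation of G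
  have hEG : ∫ ω, V₀ * (α * ∏ j, (1 + K * X j ω) + (1 - α) * ∏ j, (1 - K * X j ω) - 1) ∂ℙ
      = V₀ * (α * (1 + K * μ) ^ k + (1 - α) * (1 - K * μ) ^ k - 1) := by
    have j1 : Integrable (fun ω => α * ∏ j, (1 + K * X j ω)) ℙ := hiP.const_mul α
    have j2 : Integrable (fun ω => (1 - α) * ∏ j, (1 - K * X j ω)) ℙ := hiQ.const_mul (1 - α)
    have j12 : Integrable (fun ω => α * ∏ j, (1 + K * X j ω)
        + (1 - α) * ∏ j, (1 - K * X j ω)) ℙ := j1.add j2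
    rw [integral_const_mul, integral_sub j12 (integrable_const 1), integral_add j1 j2,
      integral_const_mul, integral_const_mul, hEP, hEQ, integral_const]
    simp
  -- expectation of G²
  have hEG2 : ∫ ω, (V₀ * (α * ∏ j, (1 + K * X j ω) + (1 - α) * ∏ j, (1 - K * X j ω) - 1)) ^ 2 ∂ℙ
      = V₀ ^ 2 * α ^ 2 * ((1 + K * μ) ^ 2 + K ^ 2 * σ ^ 2) ^ k
        + V₀ ^ 2 * (1 - α) ^ 2 * ((1 - K * μ) ^ 2 + K ^ 2 * σ ^ 2) ^ k
        + 2 * V₀ ^ 2 * α * (1 - α) * (1 - K ^ 2 * (σ ^ 2 + μ ^ 2)) ^ k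
        + (-(2 * V₀ ^ 2 * α)) * (1 + K * μ) ^ k
        + (-(2 * V₀ ^ 2 * (1 - α))) * (1 - K * μ) ^ k + V₀ ^ 2 := by
    have hexp : (fun ω =>
        (V₀ * (α * ∏ j, (1 + K * X j ω) + (1 - α) * ∏ j, (1 - K * X j ω) - 1)) ^ 2)
        = fun ω =>
          (V₀ ^ 2 * α ^ 2) * (∏ j, (1 + K * X j ω)) ^ 2
          + (V₀ ^ 2 * (1 - α) ^ 2) * (∏ j, (1 - K * X j ω)) ^ 2
          + (2 * V₀ ^ 2 * α * (1 - α)) * ((∏ j, (1 + K * X j ω)) * ∏ j, (1 - K * X j ω))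
          + (-(2 * V₀ ^ 2 * α)) * (∏ j, (1 + K * X j ω))
          + (-(2 * V₀ ^ 2 * (1 - α))) * (∏ j, (1 - K * X j ω)) + V₀ ^ 2 := by
      funext ω; ring
    rw [hexp]
    have i1 : Integrable (fun ω => (V₀ ^ 2 * α ^ 2) * (∏ j, (1 + K * X j ω)) ^ 2) ℙ :=
      hiP2'.const_mul _
    have i2 : Integrable (fun ω => (V₀ ^ 2 * (1 - α) ^ 2) * (∏ j, (1 - K * X j ω)) ^ 2) ℙ :=
      hiQ2'.const_mul _
    have i3 : Integrable (fun ω =>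
        (2 * V₀ ^ 2 * α * (1 - α)) * ((∏ j, (1 + K * X j ω)) * ∏ j, (1 - K * X j ω))) ℙ :=
      hiPQ'.const_mul _
    have i4 : Integrable (fun ω => (-(2 * V₀ ^ 2 * α)) * (∏ j, (1 + K * X j ω))) ℙ :=
      hiP.const_mul _
    have i5 : Integrable (fun ω => (-(2 * V₀ ^ 2 * (1 - α))) * (∏ j, (1 - K * X j ω))) ℙ :=
      hiQ.const_mul _
    have i12 : Integrable (fun ω => (V₀ ^ 2 * α ^ 2) * (∏ j, (1 + K * X j ω)) ^ 2
        + (V₀ ^ 2 * (1 - α) ^ 2) * (∏ j, (1 - K * X j ω)) ^ 2) ℙ := i1.add i2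
    have i123 : Integrable (fun ω => (V₀ ^ 2 * α ^ 2) * (∏ j, (1 + K * X j ω)) ^ 2
        + (V₀ ^ 2 * (1 - α) ^ 2) * (∏ j, (1 - K * X j ω)) ^ 2
        + (2 * V₀ ^ 2 * α * (1 - α)) * ((∏ j, (1 + K * X j ω)) * ∏ j, (1 - K * X j ω))) ℙ :=
      i12.add i3
    have i1234 : Integrable (fun ω => (V₀ ^ 2 * α ^ 2) * (∏ j, (1 + K * X j ω)) ^ 2
        + (V₀ ^ 2 * (1 - α) ^ 2) * (∏ j, (1 - K * X j ω)) ^ 2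
        + (2 * V₀ ^ 2 * α * (1 - α)) * ((∏ j, (1 + K * X j ω)) * ∏ j, (1 - K * X j ω))
        + (-(2 * V₀ ^ 2 * α)) * (∏ j, (1 + K * X j ω))) ℙ := i123.add i4
    have i12345 : Integrable (fun ω => (V₀ ^ 2 * α ^ 2) * (∏ j, (1 + K * X j ω)) ^ 2
        + (V₀ ^ 2 * (1 - α) ^ 2) * (∏ j, (1 - K * X j ω)) ^ 2
        + (2 * V₀ ^ 2 * α * (1 - α)) * ((∏ j, (1 + K * X j ω)) * ∏ j, (1 - K * X j ω))
        + (-(2 * V₀ ^ 2 * α)) * (∏ j, (1 + K * X j ω))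
        + (-(2 * V₀ ^ 2 * (1 - α))) * (∏ j, (1 - K * X j ω))) ℙ := i1234.add i5
    rw [integral_add i12345 (integrable_const _),
      integral_add i1234 i5,
      integral_add i123 i4,
      integral_add i12 i3,
      integral_add i1 i2,
      integral_const_mul, integral_const_mul, integral_const_mul, integral_const_mul,
      integral_const_mul, hEP2', hEQ2', hEPQ', hEP, hEQ, integral_const]
    simp
  rw [variance_eq_sub hG2]
  simp only [Pi.pow_apply]
  rw [hEG2, hEG]
  ring
end
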